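/- Let f : ℝⁿ → ℝ be twice continuously differentiable with μI ≼ ∇²f(x) ≼ LI for all x, where 0 < μ ≤ L, and suppose ‖∇²f(u) − ∇²f(v)‖ ≤ ω for all u, v ∈ ℝⁿ. Fix 0 < η ≤ 2/(L+μ), m ≥ 1, λ > 0. Given x_{k−m}, …, x_k ∈ ℝⁿ with ∇f(x_k) ≠ 0, let U_k be the n×m matrix with columns ∇f(x_k) − ∇f(x_j), j = k−m, …, k−1; set α' = (α_{k−m}, …, α_{k−1})ᵀ = (U_kᵀU_k + λI)⁻¹U_kᵀ∇f(x_k), α_k = 1 − Σ_{j=k−m}^{k−1} α_j, and x_{k+1} = Σ_{j=k−m}^{k} α_j (x_j − η∇f(x_j)). Then ‖∇f(x_{k+1})‖ ≤ (1 − ημ) δ_k ‖∇f(x_k)‖ + ω ‖α'‖ (Σ_{j=k−m}^{k−1} ‖x_k − x_j‖²)^{1/2}, where Π_k = I − U_k(U_kᵀU_k + λI)⁻¹U_kᵀ and δ_k = ‖Π_k∇f(x_k)‖/‖∇f(x_k)‖ ≤ 1. -/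

import Mathlib

open scoped RealInnerProductSpace Matrix
open Finset

section AAhelp
variable {E' : Type*} [NormedAddCommGroup E'] [InnerProductSpace ℝ E']

private lemma aa_selfadj_bound (A : E' →L[ℝ] E') (c : ℝ) (hc : 0 ≤ c)
    (hsym : ∀ u v : E', ⟪A u, v⟫ = ⟪u, A v⟫)
    (hquad : ∀ v : E', |⟪A v, v⟫| ≤ c * ‖v‖ ^ 2) (w : E') : ‖A w‖ ≤ c * ‖w‖ := by
  have hbil : ∀ u v : E', ⟪A u, v⟫ ≤ c / 2 * (‖u‖ ^ 2 + ‖v‖ ^ 2) := by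
    intro u v
    have e1 : ⟪A v, u⟫ = ⟪A u, v⟫ := by rw [hsym v u, real_inner_comm]
    have h1 : ⟪A (u + v), u + v⟫ - ⟪A (u - v), u - v⟫ = 4 * ⟪A u, v⟫ := by
      simp only [map_add, map_sub, inner_add_left, inner_add_right, inner_sub_left,
        inner_sub_right]
      rw [e1]; ring
    have h2 := abs_le.mp (hquad (u + v))
    have h3 := abs_le.mp (hquad (u - v))
    have h4 : ‖u + v‖ ^ 2 + ‖u - v‖ ^ 2 = 2 * ‖u‖ ^ 2 + 2 * ‖v‖ ^ 2 := by
      rw [norm_add_sq_real, norm_sub_sq_real]; ring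
    have h5 : c * ‖u + v‖ ^ 2 + c * ‖u - v‖ ^ 2 = c * (2 * ‖u‖ ^ 2 + 2 * ‖v‖ ^ 2) := by
      rw [← mul_add, h4]
    linarith
  rcases eq_or_ne (A w) 0 with h0 | h0
  · rw [h0, norm_zero]; positivity
  have hw0 : w ≠ 0 := by rintro rfl; simp at h0
  have hAw : (0:ℝ) < ‖A w‖ := norm_pos_iff.mpr h0
  have hww : (0:ℝ) < ‖w‖ := norm_pos_iff.mpr hw0
  set t : ℝ := Real.sqrt (‖A w‖ / ‖w‖) with ht
  have ht0 : 0 < t := Real.sqrt_pos.mpr (by positivity)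
  have ht2 : t ^ 2 = ‖A w‖ / ‖w‖ := Real.sq_sqrt (by positivity)
  have key := hbil (t • w) (t⁻¹ • A w)
  rw [map_smul, real_inner_smul_left, real_inner_smul_right,
    real_inner_self_eq_norm_sq] at key
  have e2 : ‖t • w‖ ^ 2 = ‖A w‖ * ‖w‖ := by
    rw [norm_smul, Real.norm_eq_abs, abs_of_pos ht0, mul_pow, ht2]
    field_simp
  have e3 : ‖t⁻¹ • A w‖ ^ 2 = ‖A w‖ * ‖w‖ := by
    rw [norm_smul, Real.norm_eq_abs, abs_of_pos (inv_pos.mpr ht0), mul_pow, inv_pow, ht2,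
      inv_div]
    field_simp
  rw [e2, e3, ← mul_assoc, mul_inv_cancel₀ ht0.ne', one_mul] at key
  have : ‖A w‖ * ‖A w‖ ≤ (c * ‖w‖) * ‖A w‖ := by nlinarith
  exact le_of_mul_le_mul_right this hAw

private lemma aa_ftc_grad [CompleteSpace E'] (g : E' → E') (hg : ContDiff ℝ 1 g) (a b : E') :
    g b - g a = ∫ t in (0:ℝ)..1, fderiv ℝ g (a + t • (b - a)) (b - a) := by
  have hderiv : ∀ t : ℝ, HasDerivAt (fun s : ℝ => g (a + s • (b - a)))
      (fderiv ℝ g (a + t • (b - a)) (b - a)) t := by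
    intro t
    have hc : HasDerivAt (fun s : ℝ => a + s • (b - a)) (b - a) t := by
      simpa using ((hasDerivAt_id t).smul_const (b - a)).const_add a
    have hgd : HasFDerivAt g (fderiv ℝ g (a + t • (b - a))) (a + t • (b - a)) :=
      (hg.differentiable one_ne_zero _).hasFDerivAt
    exact hgd.comp_hasDerivAt t hc
  have hcont : Continuous fun t : ℝ => fderiv ℝ g (a + t • (b - a)) (b - a) :=
    Continuous.clm_apply ((hg.continuous_fderiv one_ne_zero).comp (by continuity)) continuous_const
  have h := intervalIntegral.integral_eq_sub_of_hasDerivAt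
    (f := fun s : ℝ => g (a + s • (b - a))) (fun t _ => hderiv t)
    (hcont.intervalIntegrable 0 1)
  simpa using h.symm

end AAhelp

private lemma aa_grad_cd {n : ℕ} (f : EuclideanSpace ℝ (Fin n) → ℝ) (hf : ContDiff ℝ 2 f) :
    ContDiff ℝ 1 (gradient f) := by
  have h2 : ContDiff ℝ 1 (fderiv ℝ f) := hf.fderiv_right (by norm_num)
  exact ((InnerProductSpace.toDual ℝ (EuclideanSpace ℝ (Fin n))).symm.contDiff).comp h2

private lemma aa_hess_symm {n : ℕ} (f : EuclideanSpace ℝ (Fin n) → ℝ) (hf : ContDiff ℝ 2 f)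
    (z u v : EuclideanSpace ℝ (Fin n)) :
    ⟪fderiv ℝ (gradient f) z u, v⟫ = ⟪u, fderiv ℝ (gradient f) z v⟫ := by
  set e : EuclideanSpace ℝ (Fin n) →L[ℝ] StrongDual ℝ (EuclideanSpace ℝ (Fin n)) :=
    (InnerProductSpace.toDual ℝ
      (EuclideanSpace ℝ (Fin n))).toContinuousLinearEquiv.toContinuousLinearMap with he
  have hA : HasFDerivAt (gradient f) (fderiv ℝ (gradient f) z) z :=
    ((aa_grad_cd f hf).differentiable one_ne_zero z).hasFDerivAt
  have hdf : ∀ y, HasFDerivAt f ((fun y => e (gradient f y)) y) y := by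
    intro y
    have h : e (gradient f y) = fderiv ℝ f y :=
      (InnerProductSpace.toDual ℝ (EuclideanSpace ℝ (Fin n))).apply_symm_apply (fderiv ℝ f y)
    show HasFDerivAt f (e (gradient f y)) y
    rw [h]
    exact (hf.differentiable two_ne_zero y).hasFDerivAt
  have hx : HasFDerivAt (fun y => e (gradient f y)) (e.comp (fderiv ℝ (gradient f) z)) z := by
    exact e.hasFDerivAt.comp z hA
  have hsym := second_derivative_symmetric hdf hx u v
  simp only [ContinuousLinearMap.comp_apply] at hsym
  have h1 : ∀ w y : EuclideanSpace ℝ (Fin n), (e w) y = ⟪w, y⟫ := fun w y => rfl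
  rw [h1, h1] at hsym
  rw [hsym, real_inner_comm]

set_option maxHeartbeats 1000000 in
/-- **Anderson-accelerated gradient step on a non-quadratic function: one-step bound.**
For `f ∈ C²` with `μI ≼ ∇²f ≼ LI` everywhere (`0 < μ ≤ L`) and Hessian oscillation
uniformly bounded by `ω`, step size `0 < η ≤ 2/(L+μ)`, window `m ≥ 1`, regularization
`lam > 0`, the Anderson step satisfies
`‖∇f(x_{k+1})‖ ≤ (1−ημ) δ_k ‖∇f(x_k)‖ + ω ‖α'‖ (Σ_j ‖x_k − x_j‖²)^{1/2}` with `δ_k ≤ 1`. -/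
theorem aa_gd_nonquadratic_one_step
    (n m : ℕ) (hn : 1 ≤ n) (hm : 1 ≤ m)
    (f : EuclideanSpace ℝ (Fin n) → ℝ) (hf : ContDiff ℝ 2 f)
    (μ L ω : ℝ) (hμ : 0 < μ) (hμL : μ ≤ L)
    -- eigenvalues of the Hessian lie in `[μ, L]` at every point
    (hspec : ∀ (z : EuclideanSpace ℝ (Fin n)) (v : EuclideanSpace ℝ (Fin n)),
      μ * ‖v‖ ^ 2 ≤ ⟪fderiv ℝ (gradient f) z v, v⟫ ∧
      ⟪fderiv ℝ (gradient f) z v, v⟫ ≤ L * ‖v‖ ^ 2)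
    -- oscillation of the Hessian is bounded by `ω` in operator norm
    (hosc : ∀ u v : EuclideanSpace ℝ (Fin n),
      ‖fderiv ℝ (gradient f) u - fderiv ℝ (gradient f) v‖ ≤ ω)
    (η : ℝ) (hη0 : 0 < η) (hη : η ≤ 2 / (L + μ))
    (lam : ℝ) (hlam : 0 < lam)
    -- the window of points `x 0, …, x m`, where `x (Fin.last m)` plays the role of `x_k`
    (x : Fin (m + 1) → EuclideanSpace ℝ (Fin n))
    (hgk : gradient f (x (Fin.last m)) ≠ 0)
    -- the matrix `U_k`, with columns `∇f(x_k) − ∇f(x_j)`, `j = k−m, …, k−1`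
    (U : Matrix (Fin n) (Fin m) ℝ)
    (hU : ∀ (i : Fin n) (j : Fin m),
      U i j = (gradient f (x (Fin.last m)) - gradient f (x j.castSucc)) i)
    -- the regularized least-squares coefficients
    (α' : Fin m → ℝ)
    (hα' : α' = ((Uᵀ * U + lam • 1)⁻¹ * Uᵀ).mulVec
      (gradient f (x (Fin.last m)) : EuclideanSpace ℝ (Fin n)))
    (αk : ℝ) (hαk : αk = 1 - ∑ j, α' j)
    -- the Anderson-accelerated iterate `x_{k+1}`
    (xnew : EuclideanSpace ℝ (Fin n))
    (hxnew : xnew =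
      (∑ j : Fin m, α' j • (x j.castSucc - η • gradient f (x j.castSucc)))
        + αk • (x (Fin.last m) - η • gradient f (x (Fin.last m))))
    -- the projection operator `Π_k` and the gain `δ_k`
    (P : Matrix (Fin n) (Fin n) ℝ)
    (hP : P = 1 - U * (Uᵀ * U + lam • 1)⁻¹ * Uᵀ)
    (δ : ℝ)
    (hδ : δ = ‖Matrix.toEuclideanLin P (gradient f (x (Fin.last m)))‖
                / ‖gradient f (x (Fin.last m))‖) :
    ‖gradient f xnew‖ ≤
      (1 - η * μ) * δ * ‖gradient f (x (Fin.last m))‖ +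
        ω * Real.sqrt (∑ j : Fin m, (α' j) ^ 2) *
          Real.sqrt (∑ j : Fin m, ‖x (Fin.last m) - x j.castSucc‖ ^ 2) ∧
    δ ≤ 1 := by
  classical
  have hω0 : 0 ≤ ω := by
    have h := hosc (x (Fin.last m)) (x (Fin.last m))
    rw [sub_self] at h
    exact le_trans (norm_nonneg _) h
  have hL0 : (0:ℝ) < L + μ := by linarith
  have hηLμ : η * (L + μ) ≤ 2 := by
    rw [le_div_iff₀ hL0] at hη
    linarith
  have hημ1 : η * μ ≤ 1 := by nlinarith
  have h1ημ : (0:ℝ) ≤ 1 - η * μ := by linarith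
  have hg1 : ContDiff ℝ 1 (gradient f) := aa_grad_cd f hf
  have hHcont : Continuous (fun z => fderiv ℝ (gradient f) z) := hg1.continuous_fderiv one_ne_zero
  set xk : EuclideanSpace ℝ (Fin n) := x (Fin.last m) with hxkdef
  set G : EuclideanSpace ℝ (Fin n) := gradient f xk with hGdef
  -- step operator bound
  have hstep : ∀ z w : EuclideanSpace ℝ (Fin n),
      ‖w - η • fderiv ℝ (gradient f) z w‖ ≤ (1 - η * μ) * ‖w‖ := by
    intro z w
    set A : EuclideanSpace ℝ (Fin n) →L[ℝ] EuclideanSpace ℝ (Fin n) :=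
      ContinuousLinearMap.id ℝ _ - η • fderiv ℝ (gradient f) z with hA
    have hApp : ∀ v, A v = v - η • fderiv ℝ (gradient f) z v := fun v => rfl
    have h := aa_selfadj_bound A (1 - η * μ) h1ημ ?_ ?_ w
    · rwa [hApp] at h
    · intro u v
      simp only [hApp, inner_sub_left, inner_sub_right, real_inner_smul_left,
        real_inner_smul_right]
      rw [aa_hess_symm f hf]
    · intro v
      obtain ⟨hs1, hs2⟩ := hspec z v
      have hv : ⟪A v, v⟫ = ‖v‖ ^ 2 - η * ⟪fderiv ℝ (gradient f) z v, v⟫ := by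
        rw [hApp, inner_sub_left, real_inner_smul_left, real_inner_self_eq_norm_sq]
      rw [hv, abs_le]
      constructor
      · nlinarith [sq_nonneg ‖v‖, mul_le_mul_of_nonneg_left hs2 hη0.le,
          mul_nonneg (by linarith : (0:ℝ) ≤ 2 - η * (L + μ)) (sq_nonneg ‖v‖)]
      · nlinarith [mul_le_mul_of_nonneg_left hs1 hη0.le]
  -- matrix set-up
  set S : Matrix (Fin m) (Fin m) ℝ := Uᵀ * U + lam • 1 with hSdef
  have hSpd : S.PosDef := by
    have h1 : (Uᵀ * U).PosSemidef := by
      simpa using Matrix.posSemidef_conjTranspose_mul_self U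
    have h2 : (lam • 1 : Matrix (Fin m) (Fin m) ℝ).PosDef := by
      rw [Matrix.smul_one_eq_diagonal]
      exact Matrix.posDef_diagonal_iff.mpr fun _ => hlam
    exact Matrix.PosDef.posSemidef_add h1 h2
  have hdet : IsUnit S.det := hSpd.det_pos.ne'.isUnit
  have hSinv : S * S⁻¹ = 1 := Matrix.mul_nonsing_inv S hdet
  have hα'v : α' = S⁻¹.mulVec (Uᵀ.mulVec G) := by
    rw [hα', ← Matrix.mulVec_mulVec]
  set q : Fin n → ℝ := U.mulVec α' with hqdef
  set gb : EuclideanSpace ℝ (Fin n) :=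
    G - ∑ j : Fin m, α' j • (G - gradient f (x j.castSucc)) with hgbdef
  have hsum_apply : ∀ (c : Fin m → ℝ) (v : Fin m → EuclideanSpace ℝ (Fin n)) (i : Fin n),
      (∑ j, c j • v j) i = ∑ j, c j * v j i := by
    intro c v i
    rw [WithLp.ofLp_sum]
    rw [Finset.sum_apply]
    rfl
  have hgbq : ∀ i, gb i = G i - q i := by
    intro i
    have h1 : gb i = G i - (∑ j : Fin m, α' j • (G - gradient f (x j.castSucc))) i := rfl
    rw [h1, hsum_apply]
    congr 1
    simp only [hqdef, Matrix.mulVec, dotProduct]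
    refine Finset.sum_congr rfl fun j _ => ?_
    rw [hU i j]
    show α' j * (G i - gradient f (x j.castSucc) i) = (G i - gradient f (x j.castSucc) i) * α' j
    ring
  have hPg : Matrix.toEuclideanLin P G = gb := by
    ext i
    have h1 : Matrix.toEuclideanLin P G i = P.mulVec G i := by
      simp [Matrix.toEuclideanLin_apply]
    rw [h1, hP, Matrix.sub_mulVec, Matrix.one_mulVec]
    have h2 : (U * S⁻¹ * Uᵀ).mulVec G = U.mulVec α' := by
      rw [hα'v, Matrix.mulVec_mulVec, Matrix.mulVec_mulVec, Matrix.mul_assoc]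
    show G i - (U * S⁻¹ * Uᵀ).mulVec G i = gb i
    rw [h2, hgbq i]
  have hGn : (0:ℝ) < ‖G‖ := norm_pos_iff.mpr hgk
  have hδval : δ = ‖gb‖ / ‖G‖ := by rw [hδ, hPg]
  have hδG : δ * ‖G‖ = ‖gb‖ := by rw [hδval, div_mul_cancel₀ _ hGn.ne']
  -- ‖gb‖ ≤ ‖G‖
  have hinner : ∀ a b : EuclideanSpace ℝ (Fin n), ⟪a, b⟫ = ∑ i, a i * b i := by
    intro a b
    simp [PiLp.inner_apply, RCLike.inner_apply, conj_trivial, mul_comm]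
  have hw2 : S.mulVec α' = Uᵀ.mulVec G := by
    rw [hα'v, Matrix.mulVec_mulVec, hSinv, Matrix.one_mulVec]
  have hqq : ∀ w : Fin m → ℝ, (U *ᵥ w) ⬝ᵥ (U *ᵥ w) = ((Uᵀ * U) *ᵥ w) ⬝ᵥ w := by
    intro w
    rw [Matrix.dotProduct_mulVec, ← Matrix.mulVec_transpose, Matrix.mulVec_mulVec]
  have hGq : G ⬝ᵥ q = ((Uᵀ * U) *ᵥ α') ⬝ᵥ α' + lam * (α' ⬝ᵥ α') := by
    rw [hqdef, Matrix.dotProduct_mulVec, ← Matrix.mulVec_transpose, ← hw2, hSdef,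
      Matrix.add_mulVec, add_dotProduct]
    congr 1
    rw [Matrix.smul_mulVec, Matrix.one_mulVec, smul_dotProduct]
    rfl
  have hgbnorm : ‖gb‖ ^ 2 = ‖G‖ ^ 2 - 2 * (G ⬝ᵥ q) + q ⬝ᵥ q := by
    rw [← real_inner_self_eq_norm_sq, ← real_inner_self_eq_norm_sq, hinner, hinner]
    have h : ∀ i, gb i * gb i = G i * G i - 2 * (G i * q i) + q i * q i := by
      intro i; rw [hgbq i]; ring
    simp_rw [h]
    rw [Finset.sum_add_distrib, Finset.sum_sub_distrib, ← Finset.mul_sum]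
    rfl
  have hqq0 : (0:ℝ) ≤ q ⬝ᵥ q := Finset.sum_nonneg fun i _ => mul_self_nonneg _
  have hαα0 : (0:ℝ) ≤ α' ⬝ᵥ α' := Finset.sum_nonneg fun i _ => mul_self_nonneg _
  have hSα : ((Uᵀ * U) *ᵥ α') ⬝ᵥ α' = q ⬝ᵥ q := by rw [hqdef, hqq]
  have hle2 : ‖gb‖ ^ 2 ≤ ‖G‖ ^ 2 := by
    rw [hgbnorm, hGq, hSα]
    nlinarith [hqq0, hαα0, hlam]
  have hgb_le : ‖gb‖ ≤ ‖G‖ := by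
    have h := Real.sqrt_le_sqrt hle2
    rwa [Real.sqrt_sq (norm_nonneg _), Real.sqrt_sq (norm_nonneg _)] at h
  have hδ1 : δ ≤ 1 := by
    rw [hδval]
    exact div_le_one_of_le₀ hgb_le (norm_nonneg _)
  -- geometry
  set xb : EuclideanSpace ℝ (Fin n) := xk + ∑ j : Fin m, α' j • (x j.castSucc - xk) with hxbdef
  have hxbk : xb - xk = ∑ j : Fin m, α' j • (x j.castSucc - xk) := add_sub_cancel_left xk _
  have e1 : ∑ j : Fin m, α' j • (x j.castSucc - η • gradient f (x j.castSucc))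
      = (∑ j : Fin m, α' j • x j.castSucc)
        - η • ∑ j : Fin m, α' j • gradient f (x j.castSucc) := by
    rw [Finset.smul_sum, ← Finset.sum_sub_distrib]
    refine Finset.sum_congr rfl fun j _ => ?_
    rw [smul_sub, smul_comm]
  have e2 : ∑ j : Fin m, α' j • (G - gradient f (x j.castSucc))
      = (∑ j : Fin m, α' j) • G - ∑ j : Fin m, α' j • gradient f (x j.castSucc) := by
    rw [Finset.sum_smul, ← Finset.sum_sub_distrib]
    exact Finset.sum_congr rfl fun j _ => smul_sub _ _ _
  have e3 : ∑ j : Fin m, α' j • (x j.castSucc - xk)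
      = (∑ j : Fin m, α' j • x j.castSucc) - (∑ j : Fin m, α' j) • xk := by
    rw [Finset.sum_smul, ← Finset.sum_sub_distrib]
    exact Finset.sum_congr rfl fun j _ => smul_sub _ _ _
  have hxnew_eq : xnew = xb - η • gb := by
    rw [hxnew, e1, hαk, hxbdef, e3, hgbdef, e2]
    module
  have hcontI : ∀ z c w : EuclideanSpace ℝ (Fin n),
      Continuous fun t : ℝ => fderiv ℝ (gradient f) (z + t • c) w := by
    intro z c w
    exact Continuous.clm_apply
      (hHcont.comp (continuous_const.add (continuous_id.smul continuous_const))) continuous_const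
  have ftcj : ∀ j : Fin m, gradient f (x j.castSucc) - G =
      ∫ t in (0:ℝ)..1,
        fderiv ℝ (gradient f) (xk + t • (x j.castSucc - xk)) (x j.castSucc - xk) := by
    intro j
    exact aa_ftc_grad (gradient f) hg1 xk (x j.castSucc)
  have ftcb : gradient f xb - G =
      ∫ t in (0:ℝ)..1, fderiv ℝ (gradient f) (xk + t • (xb - xk)) (xb - xk) :=
    aa_ftc_grad (gradient f) hg1 xk xb
  have hsplit : gradient f xb - gb =
      ∫ t in (0:ℝ)..1, ∑ j : Fin m, α' j •
        ((fderiv ℝ (gradient f) (xk + t • (xb - xk)) -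
          fderiv ℝ (gradient f) (xk + t • (x j.castSucc - xk))) (x j.castSucc - xk)) := by
    have hg1' : gradient f xb - gb
        = (gradient f xb - G) - ∑ j : Fin m, α' j • (gradient f (x j.castSucc) - G) := by
      have hneg : ∑ j : Fin m, α' j • (G - gradient f (x j.castSucc))
          = - ∑ j : Fin m, α' j • (gradient f (x j.castSucc) - G) := by
        rw [← Finset.sum_neg_distrib]
        exact Finset.sum_congr rfl fun j _ => by rw [← smul_neg, neg_sub]
      rw [hgbdef, hneg]
      abel
    have hj : ∀ j : Fin m, α' j • (gradient f (x j.castSucc) - G) =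
        ∫ t in (0:ℝ)..1, α' j •
          fderiv ℝ (gradient f) (xk + t • (x j.castSucc - xk)) (x j.castSucc - xk) := by
      intro j
      rw [ftcj j, ← intervalIntegral.integral_smul]
    rw [hg1', ftcb]
    simp_rw [hj]
    rw [← intervalIntegral.integral_finset_sum
      (f := fun j t => α' j •
        fderiv ℝ (gradient f) (xk + t • (x j.castSucc - xk)) (x j.castSucc - xk))
      (fun j _ => ((hcontI _ _ _).const_smul (α' j)).intervalIntegrable 0 1)]
    rw [← intervalIntegral.integral_sub
      (f := fun t => fderiv ℝ (gradient f) (xk + t • (xb - xk)) (xb - xk))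
      (g := fun t => ∑ j : Fin m, α' j •
        fderiv ℝ (gradient f) (xk + t • (x j.castSucc - xk)) (x j.castSucc - xk))
      ((hcontI _ _ _).intervalIntegrable 0 1)
      (Continuous.intervalIntegrable
        (continuous_finset_sum _ fun j _ => (hcontI _ _ _).const_smul (α' j)) 0 1)]
    apply intervalIntegral.integral_congr
    intro t _
    simp only [ContinuousLinearMap.sub_apply, smul_sub, Finset.sum_sub_distrib]
    congr 1
    rw [hxbk, map_sum]
    exact Finset.sum_congr rfl fun j _ => map_smul _ _ _
  have hnormb : ‖gradient f xb - gb‖ ≤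
      ω * Real.sqrt (∑ j : Fin m, (α' j) ^ 2) *
        Real.sqrt (∑ j : Fin m, ‖xk - x j.castSucc‖ ^ 2) := by
    rw [hsplit]
    have hb : ‖∫ t in (0:ℝ)..1, ∑ j : Fin m, α' j •
        ((fderiv ℝ (gradient f) (xk + t • (xb - xk)) -
          fderiv ℝ (gradient f) (xk + t • (x j.castSucc - xk))) (x j.castSucc - xk))‖
        ≤ (∑ j : Fin m, |α' j| * (ω * ‖x j.castSucc - xk‖)) * |(1:ℝ) - 0| := by
      apply intervalIntegral.norm_integral_le_of_norm_le_const
      intro t ht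
      refine (norm_sum_le _ _).trans ?_
      apply Finset.sum_le_sum
      intro j _
      rw [norm_smul, Real.norm_eq_abs]
      refine mul_le_mul_of_nonneg_left ?_ (abs_nonneg _)
      refine (ContinuousLinearMap.le_opNorm _ _).trans ?_
      exact mul_le_mul_of_nonneg_right (hosc _ _) (norm_nonneg _)
    rw [show |(1:ℝ) - 0| = 1 by norm_num, mul_one] at hb
    refine hb.trans ?_
    have hCS := Real.sum_mul_le_sqrt_mul_sqrt Finset.univ
      (fun j => |α' j|) (fun j => ‖x j.castSucc - xk‖)
    calc ∑ j : Fin m, |α' j| * (ω * ‖x j.castSucc - xk‖)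
        = ω * ∑ j : Fin m, |α' j| * ‖x j.castSucc - xk‖ := by
          rw [Finset.mul_sum]
          exact Finset.sum_congr rfl fun j _ => by ring
      _ ≤ ω * (Real.sqrt (∑ j : Fin m, |α' j| ^ 2) *
            Real.sqrt (∑ j : Fin m, ‖x j.castSucc - xk‖ ^ 2)) :=
          mul_le_mul_of_nonneg_left hCS hω0
      _ = ω * Real.sqrt (∑ j : Fin m, (α' j) ^ 2) *
            Real.sqrt (∑ j : Fin m, ‖xk - x j.castSucc‖ ^ 2) := by
          simp_rw [sq_abs, norm_sub_rev]
          rw [mul_assoc]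
  have ftc2 : gradient f xnew - gradient f xb =
      ∫ t in (0:ℝ)..1, fderiv ℝ (gradient f) (xb + t • (xnew - xb)) (xnew - xb) :=
    aa_ftc_grad (gradient f) hg1 xb xnew
  have hxnb : xnew - xb = -(η • gb) := by rw [hxnew_eq]; abel
  have hpt : ∀ t : ℝ, fderiv ℝ (gradient f) (xb + t • (xnew - xb)) (xnew - xb)
      = -(η • fderiv ℝ (gradient f) (xb + t • (xnew - xb)) gb) := by
    intro t
    rw [hxnb, map_neg, map_smul]
  have hint : ∫ t in (0:ℝ)..1,
      (gb - η • fderiv ℝ (gradient f) (xb + t • (xnew - xb)) gb)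
      = gb - η • ∫ t in (0:ℝ)..1, fderiv ℝ (gradient f) (xb + t • (xnew - xb)) gb := by
    rw [intervalIntegral.integral_sub (f := fun _ => gb)
      (g := fun t => η • fderiv ℝ (gradient f) (xb + t • (xnew - xb)) gb) intervalIntegrable_const
      (((hcontI _ _ _).const_smul η).intervalIntegrable 0 1),
      intervalIntegral.integral_smul, intervalIntegral.integral_const]
    simp
  have h2int : ∫ t in (0:ℝ)..1, fderiv ℝ (gradient f) (xb + t • (xnew - xb)) (xnew - xb)
      = -(η • ∫ t in (0:ℝ)..1, fderiv ℝ (gradient f) (xb + t • (xnew - xb)) gb) := by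
    simp_rw [hpt]
    rw [intervalIntegral.integral_neg, intervalIntegral.integral_smul]
  have hrep : gradient f xnew = (gradient f xb - gb) +
      ∫ t in (0:ℝ)..1, (gb - η • fderiv ℝ (gradient f) (xb + t • (xnew - xb)) gb) := by
    calc gradient f xnew
        = gradient f xb + (gradient f xnew - gradient f xb) := by abel
      _ = gradient f xb +
          (-(η • ∫ t in (0:ℝ)..1, fderiv ℝ (gradient f) (xb + t • (xnew - xb)) gb)) := by
          rw [ftc2, h2int]
      _ = (gradient f xb - gb) +
          (gb - η • ∫ t in (0:ℝ)..1, fderiv ℝ (gradient f) (xb + t • (xnew - xb)) gb) := by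
          abel
      _ = (gradient f xb - gb) +
          ∫ t in (0:ℝ)..1, (gb - η • fderiv ℝ (gradient f) (xb + t • (xnew - xb)) gb) := by
          rw [hint]
  have hb2 : ‖∫ t in (0:ℝ)..1,
      (gb - η • fderiv ℝ (gradient f) (xb + t • (xnew - xb)) gb)‖
      ≤ (1 - η * μ) * ‖gb‖ := by
    have hb := intervalIntegral.norm_integral_le_of_norm_le_const
      (a := (0:ℝ)) (b := (1:ℝ)) (C := (1 - η * μ) * ‖gb‖)
      (f := fun t : ℝ => gb - η • fderiv ℝ (gradient f) (xb + t • (xnew - xb)) gb)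
      (fun t _ => hstep _ gb)
    simpa using hb
  refine ⟨?_, hδ1⟩
  calc ‖gradient f xnew‖
      = ‖(gradient f xb - gb) +
          ∫ t in (0:ℝ)..1, (gb - η • fderiv ℝ (gradient f) (xb + t • (xnew - xb)) gb)‖ := by
        rw [← hrep]
    _ ≤ ‖gradient f xb - gb‖ + ‖∫ t in (0:ℝ)..1,
          (gb - η • fderiv ℝ (gradient f) (xb + t • (xnew - xb)) gb)‖ := norm_add_le _ _
    _ ≤ (ω * Real.sqrt (∑ j : Fin m, (α' j) ^ 2) *
          Real.sqrt (∑ j : Fin m, ‖xk - x j.castSucc‖ ^ 2)) + (1 - η * μ) * ‖gb‖ :=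
        add_le_add hnormb hb2
    _ = (1 - η * μ) * δ * ‖G‖ + ω * Real.sqrt (∑ j : Fin m, (α' j) ^ 2) *
          Real.sqrt (∑ j : Fin m, ‖xk - x j.castSucc‖ ^ 2) := by
        rw [mul_assoc (1 - η * μ) δ ‖G‖, hδG]
        ring
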